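/- Let n ≥ 2 and let G₁ and G₂ be simple graphs on Fin n. Then G₁ and G₂ are isomorphic (there exists a graph isomorphism G₁ ≃g G₂) if and only if there exists a linear isometry equivalence L of EuclideanSpace ℝ (Fin n) such that L '' S(G₁) = S(G₂), where S(G) = {s i : i ∈ Fin n} ∪ {(s i + s j)/2 : G.Adj i j} is the point-set form of G built from the centered standard simplex vertices s. (Graph isomorphism is equivalent to exact rigid point set registration of the point-set forms.) -/

import Mathlib

/-- The centered standard simplex vertices: `s i = e_i - (1/n) • ∑ j, e_j`,
where `e_i` is the standard basis of `EuclideanSpace ℝ (Fin n)`. -/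
noncomputable def simplexPt (n : ℕ) (i : Fin n) : EuclideanSpace ℝ (Fin n) :=
  EuclideanSpace.single i (1 : ℝ) - ((1 : ℝ) / n) • ∑ j, EuclideanSpace.single j (1 : ℝ)

/-- The coordinate-permutation map `M_σ` (the permutation matrix of `σ`), as a linear
isometry equivalence of `EuclideanSpace ℝ (Fin n)`. -/
noncomputable def Mperm (n : ℕ) (σ : Equiv.Perm (Fin n)) :
    EuclideanSpace ℝ (Fin n) ≃ₗᵢ[ℝ] EuclideanSpace ℝ (Fin n) :=
  LinearIsometryEquiv.piLpCongrLeft 2 ℝ ℝ σ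

/-- The point-set form of a simple graph `G` on `Fin n`:
`S(G) = {s i : i} ∪ {(s i + s j)/2 : G.Adj i j}`. -/
noncomputable def pointSet (n : ℕ) (G : SimpleGraph (Fin n)) :
    Set (EuclideanSpace ℝ (Fin n)) :=
  Set.range (simplexPt n) ∪
    {p | ∃ i j : Fin n, G.Adj i j ∧ p = (2 : ℝ)⁻¹ • (simplexPt n i + simplexPt n j)}

open RealInnerProductSpace

lemma simplexPt_apply (n : ℕ) (i k : Fin n) :
    simplexPt n i k = (if k = i then (1:ℝ) else 0) - 1 / n := by
  have h1 : (∑ j, EuclideanSpace.single j (1:ℝ)) k = ∑ j, EuclideanSpace.single j (1:ℝ) k :=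
    by rw [WithLp.ofLp_sum]; exact Finset.sum_apply k Finset.univ _
  simp only [simplexPt, PiLp.sub_apply, PiLp.smul_apply, smul_eq_mul, h1]
  simp [EuclideanSpace.single_apply]

lemma inner_simplexPt (n : ℕ) (hn : (n:ℝ) ≠ 0) (i j : Fin n) :
    ⟪simplexPt n i, simplexPt n j⟫ = (if i = j then (1:ℝ) else 0) - 1 / n := by
  rw [PiLp.inner_apply]
  simp only [RCLike.inner_apply', conj_trivial, simplexPt_apply]
  have : ∀ k : Fin n, ((if k = i then (1:ℝ) else 0) - 1/n) * ((if k = j then (1:ℝ) else 0) - 1/n)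
      = (if k = i then (1:ℝ) else 0) * (if k = j then (1:ℝ) else 0)
        - (1/n) * (if k = i then (1:ℝ) else 0) - (1/n) * (if k = j then (1:ℝ) else 0)
        + (1/n)^2 := by
    intro k; ring
  simp only [this]
  rw [Finset.sum_add_distrib, Finset.sum_sub_distrib, Finset.sum_sub_distrib]
  simp [← Finset.mul_sum, ite_mul, Finset.sum_ite_eq', Finset.card_univ]
  field_simp
  rcases eq_or_ne i j with h | h
  · simp [h]
  · simp [h, Ne.symm h]

lemma norm_sq_simplexPt (n : ℕ) (hn : (n:ℝ) ≠ 0) (i : Fin n) :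
    ‖simplexPt n i‖ ^ 2 = 1 - 1 / n := by
  rw [← real_inner_self_eq_norm_sq, inner_simplexPt n hn]
  simp

lemma norm_sq_mid (n : ℕ) (hn : (n:ℝ) ≠ 0) {i j : Fin n} (h : i ≠ j) :
    ‖(2:ℝ)⁻¹ • (simplexPt n i + simplexPt n j)‖ ^ 2 = 1/2 - 1/n := by
  rw [norm_smul, mul_pow, norm_add_sq_real, inner_simplexPt n hn,
    norm_sq_simplexPt n hn, norm_sq_simplexPt n hn]
  simp [h]
  ring

lemma simplexPt_injective (n : ℕ) : Function.Injective (simplexPt n) := by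
  intro i j h
  have := congrArg (fun v : EuclideanSpace ℝ (Fin n) => v i) h
  simp only [simplexPt_apply] at this
  by_contra hij
  rw [if_neg hij] at this
  norm_num at this

lemma mid_eq_mid (n : ℕ) {i j k l : Fin n} (hij : i ≠ j)
    (h : simplexPt n i + simplexPt n j = simplexPt n k + simplexPt n l) :
    (k = i ∧ l = j) ∨ (k = j ∧ l = i) := by
  have hc : ∀ m : Fin n, ((if m = i then (1:ℝ) else 0) + (if m = j then (1:ℝ) else 0))
      = ((if m = k then (1:ℝ) else 0) + (if m = l then (1:ℝ) else 0)) := by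
    intro m
    have := congrArg (fun v : EuclideanSpace ℝ (Fin n) => v m) h
    simp only [PiLp.add_apply, simplexPt_apply] at this
    linarith
  have hi := hc i
  have hj := hc j
  simp [hij, Ne.symm hij] at hi hj
  rcases eq_or_ne i k with h1 | h1
  · left
    constructor
    · exact h1.symm
    · rcases eq_or_ne j l with h2 | h2
      · exact h2.symm
      · rw [if_neg h2, if_neg (fun hh => hij (h1.trans hh.symm))] at hj; norm_num at hj
  · rcases eq_or_ne i l with h2 | h2
    · right
      refine ⟨?_, h2.symm⟩
      rcases eq_or_ne j k with h3 | h3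
      · exact h3.symm
      · rw [if_neg h3, if_neg (fun hh => hij (h2.trans hh.symm))] at hj; norm_num at hj
    · simp [h1, h2] at hi

lemma Mperm_apply (n : ℕ) (σ : Equiv.Perm (Fin n)) (x : EuclideanSpace ℝ (Fin n)) (k : Fin n) :
    Mperm n σ x k = x (σ.symm k) := rfl

lemma Mperm_simplexPt (n : ℕ) (σ : Equiv.Perm (Fin n)) (i : Fin n) :
    Mperm n σ (simplexPt n i) = simplexPt n (σ i) := by
  ext k
  rw [Mperm_apply, simplexPt_apply, simplexPt_apply]
  congr 2
  rw [eq_iff_iff]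
  constructor
  · rintro rfl; simp
  · rintro rfl; simp

lemma image_pointSet (n : ℕ) (G₁ G₂ : SimpleGraph (Fin n))
    (L : EuclideanSpace ℝ (Fin n) ≃ₗᵢ[ℝ] EuclideanSpace ℝ (Fin n))
    (σ : Equiv.Perm (Fin n)) (hσ : ∀ i, L (simplexPt n i) = simplexPt n (σ i))
    (hadj : ∀ i j, G₁.Adj i j ↔ G₂.Adj (σ i) (σ j)) :
    L '' pointSet n G₁ = pointSet n G₂ := by
  ext p
  constructor
  · rintro ⟨q, hq, rfl⟩
    rcases hq with ⟨i, rfl⟩ | ⟨i, j, hij, rfl⟩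
    · exact Or.inl ⟨σ i, (hσ i).symm⟩
    · refine Or.inr ⟨σ i, σ j, (hadj i j).mp hij, ?_⟩
      simp [map_smul, map_add, hσ]
  · rintro (⟨k, rfl⟩ | ⟨k, l, hkl, rfl⟩)
    · refine ⟨simplexPt n (σ.symm k), Or.inl ⟨σ.symm k, rfl⟩, ?_⟩
      rw [hσ]; simp
    · refine ⟨(2:ℝ)⁻¹ • (simplexPt n (σ.symm k) + simplexPt n (σ.symm l)),
        Or.inr ⟨σ.symm k, σ.symm l, (hadj _ _).mpr (by simpa using hkl), rfl⟩, ?_⟩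
      simp [map_smul, map_add, hσ]

lemma adj_map (n : ℕ) (hn : (n:ℝ) ≠ 0) {G₁ G₂ : SimpleGraph (Fin n)}
    (L : EuclideanSpace ℝ (Fin n) ≃ₗᵢ[ℝ] EuclideanSpace ℝ (Fin n))
    (hL : L '' pointSet n G₁ ⊆ pointSet n G₂)
    (σ : Fin n → Fin n) (hσ : ∀ i, L (simplexPt n i) = simplexPt n (σ i))
    {i j : Fin n} (h : G₁.Adj i j) : G₂.Adj (σ i) (σ j) := by
  have hσij : σ i ≠ σ j := by
    intro e
    have h1 : L (simplexPt n i) = L (simplexPt n j) := by rw [hσ, hσ, e]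
    exact h.ne (simplexPt_injective n (L.injective h1))
  have hmem : L ((2:ℝ)⁻¹ • (simplexPt n i + simplexPt n j)) ∈ pointSet n G₂ :=
    hL ⟨_, Or.inr ⟨i, j, h, rfl⟩, rfl⟩
  have hLm : L ((2:ℝ)⁻¹ • (simplexPt n i + simplexPt n j))
      = (2:ℝ)⁻¹ • (simplexPt n (σ i) + simplexPt n (σ j)) := by
    simp [map_smul, map_add, hσ]
  rw [hLm] at hmem
  rcases hmem with ⟨k, hk⟩ | ⟨k, l, hkl, he⟩
  · have h1 : ‖simplexPt n k‖ ^ 2 = 1 - 1/n := norm_sq_simplexPt n hn k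
    rw [hk, norm_sq_mid n hn hσij] at h1
    norm_num at h1
  · have he' : simplexPt n (σ i) + simplexPt n (σ j) = simplexPt n k + simplexPt n l :=
      smul_right_injective _ (by norm_num : ((2:ℝ)⁻¹) ≠ 0) he
    rcases mid_eq_mid n hσij he' with ⟨rfl, rfl⟩ | ⟨rfl, rfl⟩
    · exact hkl
    · exact hkl.symm

theorem isomorphic_iff_exists_isometry_registration
    (n : ℕ) (hn : 2 ≤ n) (G₁ G₂ : SimpleGraph (Fin n)) :
    Nonempty (G₁ ≃g G₂) ↔
      ∃ L : EuclideanSpace ℝ (Fin n) ≃ₗᵢ[ℝ] EuclideanSpace ℝ (Fin n),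
        L '' pointSet n G₁ = pointSet n G₂ := by
  have hn0 : (n:ℝ) ≠ 0 := Nat.cast_ne_zero.mpr (by omega)
  constructor
  · rintro ⟨e⟩
    exact ⟨Mperm n e.toEquiv, image_pointSet n G₁ G₂ _ e.toEquiv
      (Mperm_simplexPt n e.toEquiv) (fun i j => e.map_rel_iff.symm)⟩
  · rintro ⟨L, hL⟩
    have hvert : ∀ i, ∃ k, L (simplexPt n i) = simplexPt n k := by
      intro i
      have hm : L (simplexPt n i) ∈ pointSet n G₂ :=
        hL ▸ ⟨simplexPt n i, Or.inl ⟨i, rfl⟩, rfl⟩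
      rcases hm with ⟨k, hk⟩ | ⟨k, l, hkl, hm⟩
      · exact ⟨k, hk.symm⟩
      · exfalso
        have h1 : ‖L (simplexPt n i)‖ ^ 2 = 1 - 1/n := by
          rw [L.norm_map]; exact norm_sq_simplexPt n hn0 i
        rw [hm, norm_sq_mid n hn0 hkl.ne] at h1
        norm_num at h1
    choose σ hσ using hvert
    have hinj : Function.Injective σ := by
      intro a b hab
      have h1 : L (simplexPt n a) = L (simplexPt n b) := by rw [hσ, hσ, hab]
      exact simplexPt_injective n (L.injective h1)
    let σe : Equiv.Perm (Fin n) := Equiv.ofBijective σ (Finite.injective_iff_bijective.mp hinj)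
    have hσe : ∀ i, σe i = σ i := fun i => rfl
    have hσsymm : ∀ k, L.symm (simplexPt n k) = simplexPt n (σe.symm k) := by
      intro k
      have h1 := hσ (σe.symm k)
      have h2 : σ (σe.symm k) = k := σe.apply_symm_apply k
      rw [h2] at h1
      rw [← h1, L.symm_apply_apply]
    have hL2 : L.symm '' pointSet n G₂ ⊆ pointSet n G₁ := by
      rw [← hL]
      rintro p ⟨q, ⟨r, hr, rfl⟩, rfl⟩
      simpa [L.symm_apply_apply] using hr
    refine ⟨⟨σe, fun {a b} => ⟨fun h2 => ?_, fun h1 => ?_⟩⟩⟩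
    · have := adj_map n hn0 L.symm hL2 σe.symm hσsymm h2
      simpa using this
    · exact adj_map n hn0 L (le_of_eq hL) σ hσ h1
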